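/- A maximal partial spread of PG(3,q) that is not a spread has size at most q^2 − 1; equivalently, there is no maximal partial spread of size exactly q^2. -/

import Mathlib

open Module

variable {K : Type*} [Field K] [Fintype K]

/-- A line of PG(3,q): a 2-dimensional subspace of K^4. -/
def IsLine (W : Submodule K (Fin 4 → K)) : Prop := finrank K W = 2

/-- A partial spread: a set of pairwise skew lines. -/
def PartialSpread (S : Set (Submodule K (Fin 4 → K))) : Prop :=
  (∀ W ∈ S, IsLine W) ∧ ∀ W ∈ S, ∀ W' ∈ S, W ≠ W' → W ⊓ W' = ⊥

/-- S covers every point of PG(3,q). -/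
def Covers (S : Set (Submodule K (Fin 4 → K))) : Prop :=
  ∀ v : Fin 4 → K, v ≠ 0 → ∃ W ∈ S, v ∈ W

/-- A spread: a partial spread covering all points. -/
def IsSpread (S : Set (Submodule K (Fin 4 → K))) : Prop := PartialSpread S ∧ Covers S

/-- A maximal partial spread: not properly contained in a larger partial spread. -/
def IsMaxPartialSpread (S : Set (Submodule K (Fin 4 → K))) : Prop :=
  PartialSpread S ∧ ∀ T, PartialSpread T → S ⊆ T → S = T

namespace MPSaux

open Submodule Finset

open scoped Classical

/-- The finset of nonzero vectors of a submodule of `K^4`. -/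
noncomputable def nz (W : Submodule K (Fin 4 → K)) : Finset (Fin 4 → K) :=
  Finset.univ.filter (fun v => v ∈ W ∧ v ≠ 0)

lemma mem_nz {W : Submodule K (Fin 4 → K)} {v : Fin 4 → K} :
    v ∈ nz W ↔ v ∈ W ∧ v ≠ 0 := by simp [nz]

lemma card_nz (W : Submodule K (Fin 4 → K)) :
    (nz W).card + 1 = Fintype.card K ^ finrank K W := by
  classical
  have h1 : nz W = (Finset.univ.filter (fun v => v ∈ W)).erase 0 := by
    ext v
    simp only [nz, Finset.mem_filter, Finset.mem_erase, Finset.mem_univ, true_and]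
    tauto
  have h0 : (0 : Fin 4 → K) ∈ Finset.univ.filter (fun v => v ∈ W) := by
    simp [W.zero_mem]
  have h2 : (Finset.univ.filter (fun v => v ∈ W)).card = Fintype.card W := by
    rw [Fintype.card_subtype]
  have h3 := Finset.card_erase_of_mem h0
  have h4 : Fintype.card W = Fintype.card K ^ finrank K W := card_eq_pow_finrank
  have h5 : 1 ≤ (Finset.univ.filter (fun v => v ∈ W)).card := Finset.card_pos.mpr ⟨0, h0⟩
  rw [h1]
  omega

lemma nz_subset {W W' : Submodule K (Fin 4 → K)} (h : W ≤ W') : nz W ⊆ nz W' := by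
  intro v hv
  exact mem_nz.mpr ⟨h (mem_nz.mp hv).1, (mem_nz.mp hv).2⟩

/-- Counting: nonzero vectors of `π` split into those in some member of a pairwise
skew family of subspaces of `π`, and the "holes". -/
lemma count (π : Submodule K (Fin 4 → K)) (T : Finset (Submodule K (Fin 4 → K)))
    (hle : ∀ W ∈ T, W ≤ π)
    (hd : ∀ W ∈ T, ∀ W' ∈ T, W ≠ W' → W ⊓ W' = ⊥) :
    (∑ W ∈ T, (nz W).card) + ((nz π).filter (fun v => ∀ W ∈ T, v ∉ W)).card
      = (nz π).card := by
  classical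
  set B := T.biUnion nz with hB
  have hdisj : ∀ W ∈ T, ∀ W' ∈ T, W ≠ W' → Disjoint (nz W) (nz W') := by
    intro W hW W' hW' hne
    rw [Finset.disjoint_left]
    intro v hv hv'
    have h1 := mem_nz.mp hv
    have h2 := mem_nz.mp hv'
    have hmem : v ∈ W ⊓ W' := Submodule.mem_inf.mpr ⟨h1.1, h2.1⟩
    rw [hd W hW W' hW' hne] at hmem
    exact h1.2 (by simpa using hmem)
  have hcard : B.card = ∑ W ∈ T, (nz W).card := Finset.card_biUnion hdisj
  have hsub : B ⊆ nz π := by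
    intro v hv
    obtain ⟨W, hW, hvW⟩ := Finset.mem_biUnion.mp hv
    exact nz_subset (hle W hW) hvW
  have hfil : (nz π).filter (fun v => ∀ W ∈ T, v ∉ W) = nz π \ B := by
    ext v
    simp only [Finset.mem_filter, Finset.mem_sdiff, hB, Finset.mem_biUnion]
    constructor
    · rintro ⟨h1, h2⟩
      refine ⟨h1, ?_⟩
      rintro ⟨W, hW, hvW⟩
      exact h2 W hW (mem_nz.mp hvW).1
    · rintro ⟨h1, h2⟩
      exact ⟨h1, fun W hW hvW => h2 ⟨W, hW, mem_nz.mpr ⟨hvW, (mem_nz.mp h1).2⟩⟩⟩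
  rw [hfil, Finset.card_sdiff_of_subset hsub]
  have := Finset.card_le_card hsub
  omega

end MPSaux


open MPSaux Submodule Finset in
/-- Global counting for a partial spread. -/
lemma MPSaux.global_count (q : ℕ) (hq : q = Fintype.card K)
    (S : Set (Submodule K (Fin 4 → K))) (hPS : PartialSpread S) :
    ∃ h : ℕ, Nat.card S * q ^ 2 + h + 1 = q ^ 4 + Nat.card S ∧ (¬ Covers S → 1 ≤ h) := by
  classical
  obtain ⟨hline, hskew⟩ := hPS
  have hSfin : S.Finite := Set.toFinite S
  set Sf : Finset (Submodule K (Fin 4 → K)) := hSfin.toFinset with hSf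
  have hmemSf : ∀ {W}, W ∈ Sf ↔ W ∈ S := fun {W} => hSfin.mem_toFinset
  have hncard : Nat.card S = Sf.card := by
    rw [Nat.card_coe_set_eq, Set.ncard_eq_toFinset_card S hSfin]
  have hrank4 : finrank K (⊤ : Submodule K (Fin 4 → K)) = 4 := by
    rw [finrank_top, Module.finrank_fin_fun]
  have htopcard : (nz (⊤ : Submodule K (Fin 4 → K))).card + 1 = q ^ 4 := by
    rw [card_nz, hrank4, hq]
  set H : Finset (Fin 4 → K) :=
    (nz (⊤ : Submodule K (Fin 4 → K))).filter (fun v => ∀ W ∈ Sf, v ∉ W) with hH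
  have hglobal : (∑ W ∈ Sf, (nz W).card) + H.card
      = (nz (⊤ : Submodule K (Fin 4 → K))).card :=
    count ⊤ Sf (fun W _ => le_top)
      (fun W hW W' hW' hne => hskew W (hmemSf.mp hW) W' (hmemSf.mp hW') hne)
  have hsum : (∑ W ∈ Sf, (nz W).card) + Sf.card = Sf.card * q ^ 2 := by
    calc (∑ W ∈ Sf, (nz W).card) + Sf.card = ∑ W ∈ Sf, ((nz W).card + 1) := by
          rw [Finset.sum_add_distrib, Finset.sum_const, smul_eq_mul, mul_one]
      _ = ∑ W ∈ Sf, q ^ 2 := by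
          refine Finset.sum_congr rfl (fun W hW => ?_)
          have h2 : finrank K W = 2 := hline W (hmemSf.mp hW)
          rw [card_nz W, h2, hq]
      _ = Sf.card * q ^ 2 := by rw [Finset.sum_const, smul_eq_mul]
  refine ⟨H.card, by rw [hncard]; omega, fun hncov => ?_⟩
  rw [Covers] at hncov
  push_neg at hncov
  obtain ⟨v, hv0, hv⟩ := hncov
  have hvH : v ∈ H := by
    simp only [hH, Finset.mem_filter, mem_nz, Submodule.mem_top, true_and]
    exact ⟨hv0, fun W hW => hv W (hmemSf.mp hW)⟩
  exact Finset.card_pos.mpr ⟨v, hvH⟩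

set_option maxHeartbeats 2000000 in
open MPSaux Submodule Finset in
/-- No maximal partial spread has size exactly `q ^ 2`. -/
lemma MPSaux.mps_ne (q : ℕ) (hq : q = Fintype.card K)
    (S : Set (Submodule K (Fin 4 → K))) (hS : IsMaxPartialSpread S) :
    Nat.card S ≠ q ^ 2 := by
  classical
  obtain ⟨⟨hline', hskew⟩, hmax⟩ := hS
  have hline : ∀ W ∈ S, finrank K W = 2 := hline'
  intro hn
  have hq2 : 2 ≤ q := hq ▸ Fintype.one_lt_card
  have hSfin : S.Finite := Set.toFinite S
  set Sf : Finset (Submodule K (Fin 4 → K)) := hSfin.toFinset with hSf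
  have hmemSf : ∀ {W}, W ∈ Sf ↔ W ∈ S := fun {W} => hSfin.mem_toFinset
  have hcardSf : Sf.card = q ^ 2 := by
    rw [← hn, Nat.card_coe_set_eq, Set.ncard_eq_toFinset_card S hSfin]
  have hrank4 : finrank K (⊤ : Submodule K (Fin 4 → K)) = 4 := by
    rw [finrank_top, Module.finrank_fin_fun]
  have htopcard : (nz (⊤ : Submodule K (Fin 4 → K))).card + 1 = q ^ 2 * q ^ 2 := by
    rw [card_nz, hrank4, hq]; ring
  set H : Finset (Fin 4 → K) :=
    (nz (⊤ : Submodule K (Fin 4 → K))).filter (fun v => ∀ W ∈ Sf, v ∉ W) with hH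
  have hmemH : ∀ {v}, v ∈ H ↔ v ≠ 0 ∧ ∀ W ∈ S, v ∉ W := by
    intro v
    simp only [hH, Finset.mem_filter, mem_nz, Submodule.mem_top, true_and]
    constructor
    · rintro ⟨h1, h2⟩; exact ⟨h1, fun W hW => h2 W (hmemSf.mpr hW)⟩
    · rintro ⟨h1, h2⟩; exact ⟨h1, fun W hW => h2 W (hmemSf.mp hW)⟩
  have hglobal : (∑ W ∈ Sf, (nz W).card) + H.card
      = (nz (⊤ : Submodule K (Fin 4 → K))).card :=
    count ⊤ Sf (fun W _ => le_top)
      (fun W hW W' hW' hne => hskew W (hmemSf.mp hW) W' (hmemSf.mp hW') hne)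
  have hsum : (∑ W ∈ Sf, (nz W).card) + Sf.card = q ^ 2 * q ^ 2 := by
    calc (∑ W ∈ Sf, (nz W).card) + Sf.card = ∑ W ∈ Sf, ((nz W).card + 1) := by
          rw [Finset.sum_add_distrib, Finset.sum_const, smul_eq_mul, mul_one]
      _ = ∑ W ∈ Sf, q ^ 2 := by
          refine Finset.sum_congr rfl (fun W hW => ?_)
          rw [card_nz W, hline W (hmemSf.mp hW), hq]
      _ = q ^ 2 * q ^ 2 := by rw [Finset.sum_const, smul_eq_mul, hcardSf]
  have hHcard : H.card + 1 = q ^ 2 := by omega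
  have hq2sq : 4 ≤ q ^ 2 := by nlinarith
  obtain ⟨u, hu⟩ := Finset.card_pos.mp (show 0 < H.card by omega)
  have hu0 : u ≠ 0 := (hmemH.mp hu).1
  have huS : ∀ W ∈ S, u ∉ W := (hmemH.mp hu).2
  -- find a second hole not proportional to u
  have hex : ∃ v ∈ H, v ∉ Submodule.span K {u} := by
    by_contra hcon
    push_neg at hcon
    have hsub : H ⊆ nz (Submodule.span K {u}) :=
      fun v hv => mem_nz.mpr ⟨hcon v hv, (hmemH.mp hv).1⟩
    have h1 := Finset.card_le_card hsub
    have h2 : (nz (Submodule.span K {u})).card + 1 = q := by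
      rw [card_nz, finrank_span_singleton hu0, pow_one, hq]
    have h3 : q < q ^ 2 := by nlinarith
    omega
  obtain ⟨v, hvH, hvu⟩ := hex
  have hv0 : v ≠ 0 := (hmemH.mp hvH).1
  set L := Submodule.span K {u} ⊔ Submodule.span K {v} with hLdef
  have hrankL : finrank K L = 2 := by
    have hdisjuv : Submodule.span K {u} ⊓ Submodule.span K {v} = ⊥ :=
      disjoint_iff.mp ((Submodule.disjoint_span_singleton' hv0).mpr hvu)
    have h := Submodule.finrank_sup_add_finrank_inf_eq
      (Submodule.span K {u}) (Submodule.span K {v})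
    rw [← hLdef] at h
    rw [hdisjuv, finrank_bot, finrank_span_singleton hu0, finrank_span_singleton hv0] at h
    omega
  have huL : u ∈ L := Submodule.mem_sup_left (Submodule.mem_span_singleton_self u)
  have hvL : v ∈ L := Submodule.mem_sup_right (Submodule.mem_span_singleton_self v)
  have hHsmul : ∀ c : K, c ≠ 0 → ∀ x ∈ H, c • x ∈ H := by
    intro c hc x hx
    obtain ⟨hx0, hxS⟩ := hmemH.mp hx
    exact hmemH.mpr ⟨smul_ne_zero hc hx0,
      fun W hW hmem => hxS W hW ((W.smul_mem_iff hc).mp hmem)⟩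
  -- every plane containing L contains all holes
  have hplane : ∀ π : Submodule K (Fin 4 → K), finrank K π = 3 → L ≤ π → H ⊆ nz π := by
    intro π hπ3 hLπ
    have hdim : ∀ W ∈ S, finrank K ↥(W ⊓ π) = 1 ∨ finrank K ↥(W ⊓ π) = 2 := by
      intro W hW
      have h1 := Submodule.finrank_sup_add_finrank_inf_eq W π
      have h2 : finrank K ↥(W ⊔ π) ≤ 4 := by
        have h := Submodule.finrank_le (W ⊔ π)
        rwa [Module.finrank_fin_fun] at h
      have h3 : finrank K ↥(W ⊓ π) ≤ 2 := by
        rw [← hline W hW]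
        exact Submodule.finrank_mono inf_le_left
      rw [hline W hW, hπ3] at h1
      omega
    have hinj : ∀ W ∈ Sf, ∀ W' ∈ Sf, W ⊓ π = W' ⊓ π → W = W' := by
      intro W hW W' hW' heq
      by_contra hne
      have hbot := hskew W (hmemSf.mp hW) W' (hmemSf.mp hW') hne
      have hle2 : W ⊓ π ≤ W ⊓ W' := le_inf inf_le_left (heq ▸ inf_le_left)
      rw [hbot, le_bot_iff] at hle2
      have h0 : finrank K ↥(W ⊓ π) = 0 := by rw [hle2, finrank_bot]
      rcases hdim W (hmemSf.mp hW) with h | h <;> omega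
    set T := Sf.image (fun W => W ⊓ π) with hT
    have hleT : ∀ X ∈ T, X ≤ π := by
      intro X hX
      obtain ⟨W, hW, rfl⟩ := Finset.mem_image.mp hX
      exact inf_le_right
    have hdT : ∀ X ∈ T, ∀ X' ∈ T, X ≠ X' → X ⊓ X' = ⊥ := by
      intro X hX X' hX' hne
      obtain ⟨W, hW, rfl⟩ := Finset.mem_image.mp hX
      obtain ⟨W', hW', rfl⟩ := Finset.mem_image.mp hX'
      have hWW' : W ≠ W' := by rintro rfl; exact hne rfl
      have hbot := hskew W (hmemSf.mp hW) W' (hmemSf.mp hW') hWW'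
      have hle2 : (W ⊓ π) ⊓ (W' ⊓ π) ≤ W ⊓ W' :=
        le_inf (inf_le_left.trans inf_le_left) (inf_le_right.trans inf_le_left)
      rw [hbot, le_bot_iff] at hle2
      exact hle2
    have hcount := count π T hleT hdT
    have hsumT : ∑ X ∈ T, (nz X).card = ∑ W ∈ Sf, (nz (W ⊓ π)).card := by
      rw [hT]
      exact Finset.sum_image hinj
    have hfilter : (nz π).filter (fun x => ∀ X ∈ T, x ∉ X) = H.filter (fun x => x ∈ π) := by
      ext x
      simp only [Finset.mem_filter, mem_nz, hT, Finset.mem_image]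
      constructor
      · rintro ⟨⟨hxπ, hx0⟩, hx⟩
        refine ⟨hmemH.mpr ⟨hx0, fun W hW hxW => ?_⟩, hxπ⟩
        exact hx (W ⊓ π) ⟨W, hmemSf.mpr hW, rfl⟩ (Submodule.mem_inf.mpr ⟨hxW, hxπ⟩)
      · rintro ⟨hxH, hxπ⟩
        obtain ⟨hx0, hxS⟩ := hmemH.mp hxH
        refine ⟨⟨hxπ, hx0⟩, ?_⟩
        rintro X ⟨W, hW, rfl⟩ hxX
        exact hxS W (hmemSf.mp hW) (Submodule.mem_inf.mp hxX).1
    -- lower bound q on plane holes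
    have hscal : (Finset.univ.filter (fun c : K => c ≠ 0)).card = q - 1 := by
      have he : Finset.univ.filter (fun c : K => c ≠ 0) = Finset.univ.erase 0 := by
        ext c; simp [Finset.mem_erase]
      rw [he, Finset.card_erase_of_mem (Finset.mem_univ 0), Finset.card_univ, hq]
    have himg : ((Finset.univ.filter (fun c : K => c ≠ 0)).image (fun c => c • u)).card
        = q - 1 := by
      rw [Finset.card_image_of_injective _ (smul_left_injective K hu0), hscal]
    have hvnot : v ∉ (Finset.univ.filter (fun c : K => c ≠ 0)).image (fun c => c • u) := by
      intro hvmem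
      obtain ⟨c, _, hcv⟩ := Finset.mem_image.mp hvmem
      exact hvu (hcv ▸ Submodule.smul_mem _ c (Submodule.mem_span_singleton_self u))
    have hsubH : insert v ((Finset.univ.filter (fun c : K => c ≠ 0)).image (fun c => c • u))
        ⊆ H.filter (fun x => x ∈ π) := by
      intro x hx
      rcases Finset.mem_insert.mp hx with rfl | hx
      · exact Finset.mem_filter.mpr ⟨hvH, hLπ hvL⟩
      · obtain ⟨c, hc, rfl⟩ := Finset.mem_image.mp hx
        have hc0 : c ≠ 0 := (Finset.mem_filter.mp hc).2
        exact Finset.mem_filter.mpr ⟨hHsmul c hc0 u hu, π.smul_mem c (hLπ huL)⟩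
    have hlow : q ≤ (H.filter (fun x => x ∈ π)).card := by
      have h1 := Finset.card_le_card hsubH
      rw [Finset.card_insert_of_notMem hvnot, himg] at h1
      omega
    have hπcard : (nz π).card + 1 = q ^ 2 * q := by
      rw [card_nz, hπ3, hq]; ring
    rw [hsumT, hfilter] at hcount
    have hterm : ∀ W ∈ Sf, (nz (W ⊓ π)).card + 1 = q ∨ (nz (W ⊓ π)).card + 1 = q ^ 2 := by
      intro W hW
      rcases hdim W (hmemSf.mp hW) with h | h
      · left; rw [card_nz, h, pow_one, hq]
      · right; rw [card_nz, h, hq]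
    by_cases hcase : ∃ W ∈ Sf, (nz (W ⊓ π)).card + 1 = q ^ 2
    · exfalso
      obtain ⟨W₀, hW₀, hW₀c⟩ := hcase
      obtain ⟨t, ht⟩ : ∃ t, t + 1 = q := ⟨q - 1, by omega⟩
      have hrest : ∀ W ∈ Sf.erase W₀, t ≤ (nz (W ⊓ π)).card := by
        intro W hW
        rcases hterm W (Finset.mem_of_mem_erase hW) with h | h
        · omega
        · have hqle : q ≤ q ^ 2 := by nlinarith
          omega
      have hsum1 := Finset.card_nsmul_le_sum (Sf.erase W₀) (fun W => (nz (W ⊓ π)).card) t hrest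
      rw [smul_eq_mul] at hsum1
      have hsum2 : (nz (W₀ ⊓ π)).card + ∑ W ∈ Sf.erase W₀, (nz (W ⊓ π)).card
          = ∑ W ∈ Sf, (nz (W ⊓ π)).card := Finset.add_sum_erase Sf (fun W => (nz (W ⊓ π)).card) hW₀
      have hcarderase : (Sf.erase W₀).card = (nz (W₀ ⊓ π)).card := by
        rw [Finset.card_erase_of_mem hW₀, hcardSf]
        omega
      rw [hcarderase] at hsum1
      set s₀ := (nz (W₀ ⊓ π)).card with hs₀
      have e4 : s₀ * q = s₀ * t + s₀ := by rw [← ht]; ring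
      have e5 : s₀ * q + q = q ^ 2 * q := by
        have h : q ^ 2 * q = (s₀ + 1) * q := by rw [hW₀c]
        rw [h]; ring
      omega
    · push_neg at hcase
      have hall : ∀ W ∈ Sf, (nz (W ⊓ π)).card + 1 = q := by
        intro W hW
        rcases hterm W hW with h | h
        · exact h
        · exact absurd h (hcase W hW)
      have hsumall : (∑ W ∈ Sf, (nz (W ⊓ π)).card) + q ^ 2 = q ^ 2 * q := by
        calc (∑ W ∈ Sf, (nz (W ⊓ π)).card) + q ^ 2
            = ∑ W ∈ Sf, ((nz (W ⊓ π)).card + 1) := by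
              rw [Finset.sum_add_distrib, Finset.sum_const, smul_eq_mul, mul_one, hcardSf]
          _ = ∑ W ∈ Sf, q := Finset.sum_congr rfl hall
          _ = q ^ 2 * q := by rw [Finset.sum_const, smul_eq_mul, hcardSf]
      have hHπ : H.card ≤ (H.filter (fun x => x ∈ π)).card := by omega
      have heqf : H.filter (fun x => x ∈ π) = H :=
        Finset.eq_of_subset_of_card_le (Finset.filter_subset _ H) hHπ
      intro x hx
      have hx' : x ∈ H.filter (fun x => x ∈ π) := by rw [heqf]; exact hx
      exact mem_nz.mpr ⟨(Finset.mem_filter.mp hx').2, (hmemH.mp hx).1⟩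
  -- construct two distinct planes through L
  have hnetop : ∀ p : Submodule K (Fin 4 → K), finrank K p < 4 → ∃ w, w ∉ p := by
    intro p hp
    by_contra hcon
    push_neg at hcon
    have hptop : p = ⊤ := eq_top_iff.mpr (fun x _ => hcon x)
    rw [hptop, hrank4] at hp
    omega
  obtain ⟨w₁, hw₁⟩ := hnetop L (by rw [hrankL]; norm_num)
  have hw₁0 : w₁ ≠ 0 := fun h => hw₁ (h ▸ L.zero_mem)
  set π₁ := L ⊔ Submodule.span K {w₁} with hπ₁
  have hrankπ₁ : finrank K π₁ = 3 := by
    have hLw₁ : L ⊓ Submodule.span K {w₁} = ⊥ :=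
      disjoint_iff.mp ((Submodule.disjoint_span_singleton' hw₁0).mpr hw₁)
    have h := Submodule.finrank_sup_add_finrank_inf_eq L (Submodule.span K {w₁})
    rw [← hπ₁] at h
    rw [hLw₁, finrank_bot, hrankL, finrank_span_singleton hw₁0] at h
    omega
  obtain ⟨w₂, hw₂⟩ := hnetop π₁ (by rw [hrankπ₁]; norm_num)
  have hw₂0 : w₂ ≠ 0 := fun h => hw₂ (h ▸ π₁.zero_mem)
  have hw₂L : w₂ ∉ L := fun h => hw₂ ((le_sup_left : L ≤ π₁) h)
  set π₂ := L ⊔ Submodule.span K {w₂} with hπ₂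
  have hrankπ₂ : finrank K π₂ = 3 := by
    have hLw₂ : L ⊓ Submodule.span K {w₂} = ⊥ :=
      disjoint_iff.mp ((Submodule.disjoint_span_singleton' hw₂0).mpr hw₂L)
    have h := Submodule.finrank_sup_add_finrank_inf_eq L (Submodule.span K {w₂})
    rw [← hπ₂] at h
    rw [hLw₂, finrank_bot, hrankL, finrank_span_singleton hw₂0] at h
    omega
  have hw₂π₂ : w₂ ∈ π₂ := Submodule.mem_sup_right (Submodule.mem_span_singleton_self w₂)
  have hinf : π₁ ⊓ π₂ = L := by
    have hlt : π₁ < π₁ ⊔ π₂ := by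
      refine lt_of_le_of_ne le_sup_left (fun h => hw₂ ?_)
      rw [h]
      exact Submodule.mem_sup_right hw₂π₂
    have h4 : finrank K ↥(π₁ ⊔ π₂) = 4 := by
      have hle4 : finrank K ↥(π₁ ⊔ π₂) ≤ 4 := by
        have h := Submodule.finrank_le (π₁ ⊔ π₂)
        rwa [Module.finrank_fin_fun] at h
      have hgt := Submodule.finrank_lt_finrank_of_lt hlt
      omega
    have h := Submodule.finrank_sup_add_finrank_inf_eq π₁ π₂
    rw [h4, hrankπ₁, hrankπ₂] at h
    have hLle : L ≤ π₁ ⊓ π₂ := le_inf le_sup_left le_sup_left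
    exact (Submodule.eq_of_le_of_finrank_le hLle (by omega)).symm
  have hHL : H ⊆ nz L := by
    intro x hx
    have h1 := hplane π₁ hrankπ₁ le_sup_left hx
    have h2 := hplane π₂ hrankπ₂ le_sup_left hx
    have hxL : x ∈ π₁ ⊓ π₂ := Submodule.mem_inf.mpr ⟨(mem_nz.mp h1).1, (mem_nz.mp h2).1⟩
    rw [hinf] at hxL
    exact mem_nz.mpr ⟨hxL, (hmemH.mp hx).1⟩
  have hLcard : (nz L).card + 1 = q ^ 2 := by rw [card_nz, hrankL, hq]
  have hHeq : H = nz L := Finset.eq_of_subset_of_card_le hHL (by omega)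
  have hLskew : ∀ W ∈ S, L ⊓ W = ⊥ := by
    intro W hW
    rw [eq_bot_iff]
    intro x hx
    rcases eq_or_ne x 0 with rfl | hx0
    · exact (⊥ : Submodule K (Fin 4 → K)).zero_mem
    · exfalso
      have hxL : x ∈ nz L := mem_nz.mpr ⟨(Submodule.mem_inf.mp hx).1, hx0⟩
      rw [← hHeq] at hxL
      exact (hmemH.mp hxL).2 W hW (Submodule.mem_inf.mp hx).2
  have hLnotS : L ∉ S := fun h => huS L h huL
  have hPS' : PartialSpread (insert L S) := by
    constructor
    · intro W hW
      rcases Set.mem_insert_iff.mp hW with rfl | hW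
      · exact hrankL
      · exact hline' W hW
    · intro W hW W' hW' hne
      rcases Set.mem_insert_iff.mp hW with rfl | hW
      · rcases Set.mem_insert_iff.mp hW' with rfl | hW'
        · exact absurd rfl hne
        · exact hLskew W' hW'
      · rcases Set.mem_insert_iff.mp hW' with rfl | hW'
        · rw [inf_comm]; exact hLskew W hW
        · exact hskew W hW W' hW' hne
  have heqS := hmax (insert L S) hPS' (Set.subset_insert L S)
  exact hLnotS (heqS ▸ Set.mem_insert L S)

/-- A maximal partial spread that is not a spread has size at most q² − 1;
in particular no maximal partial spread has size exactly q². -/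
theorem maximal_not_spread_card (q : ℕ) (hq : q = Fintype.card K)
    (S : Set (Submodule K (Fin 4 → K))) (hS : IsMaxPartialSpread S) :
    (¬ Covers S → Nat.card S ≤ q ^ 2 - 1) ∧ Nat.card S ≠ q ^ 2 := by
  have hq2 : 2 ≤ q := hq ▸ Fintype.one_lt_card
  have hne := MPSaux.mps_ne q hq S hS
  refine ⟨fun hncov => ?_, hne⟩
  obtain ⟨h, heq, hpos⟩ := MPSaux.global_count q hq S hS.1
  have h1 := hpos hncov
  set n := Nat.card S with hn
  have e2 : q ^ 4 = q ^ 2 * q ^ 2 := by ring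
  rw [e2] at heq
  have hq2sq : 4 ≤ q ^ 2 := by nlinarith
  have hle : n ≤ q ^ 2 + 1 := by
    by_contra hcon
    push_neg at hcon
    obtain ⟨m, hm⟩ : ∃ m, n = q ^ 2 + 2 + m := ⟨n - (q ^ 2 + 2), by omega⟩
    rw [hm] at heq
    have e : (q ^ 2 + 2 + m) * q ^ 2 = q ^ 2 * q ^ 2 + 2 * q ^ 2 + m * q ^ 2 := by ring
    rw [e] at heq
    have hm2 : m ≤ m * q ^ 2 := Nat.le_mul_of_pos_right m (by positivity)
    omega
  have hne1 : n ≠ q ^ 2 + 1 := by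
    intro hcon
    rw [hcon] at heq
    have e : (q ^ 2 + 1) * q ^ 2 = q ^ 2 * q ^ 2 + q ^ 2 := by ring
    rw [e] at heq
    omega
  omega
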